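/- arXiv:2212.14841 — 2 statements merged into one kernel-verified Lean document; each statement's English description precedes it below -/
import Mathlib

section
/- For every integer m ≥ 0 and real x with -2 < x < 2, ∑_{j=0}^m (-1)^j C(m+j+1, 2j+1) x^{2j+1} = sin(2(m+1)·arcsin(x/2)) / cos(arcsin(x/2)). -/
open Real Finset

lemma choose_key (n r : ℕ) :
    (n + 2).choose (r + 2) + n.choose (r + 2) = 2 * ((n + 1).choose (r + 2)) + n.choose r := by
  rw [Nat.choose_succ_succ (n + 1) (r + 1), Nat.choose_succ_succ n r,
    Nat.choose_succ_succ n (r + 1)]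
  ring

lemma sum_rec (m : ℕ) (x : ℝ) :
    ∑ j ∈ Finset.range (m + 3), (-1 : ℝ) ^ j * (Nat.choose (m + 2 + j + 1) (2 * j + 1)) * x ^ (2 * j + 1)
      = (2 - x ^ 2) * ∑ j ∈ Finset.range (m + 2), (-1 : ℝ) ^ j * (Nat.choose (m + 1 + j + 1) (2 * j + 1)) * x ^ (2 * j + 1)
        - ∑ j ∈ Finset.range (m + 1), (-1 : ℝ) ^ j * (Nat.choose (m + j + 1) (2 * j + 1)) * x ^ (2 * j + 1) := by
  set F : ℕ → ℝ := fun j => (-1 : ℝ) ^ j * (Nat.choose (m + 2 + j + 1) (2 * j + 1)) * x ^ (2 * j + 1) with hF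
  set G : ℕ → ℝ := fun j => (-1 : ℝ) ^ j * (Nat.choose (m + 1 + j + 1) (2 * j + 1)) * x ^ (2 * j + 1) with hG
  set H : ℕ → ℝ := fun j => (-1 : ℝ) ^ j * (Nat.choose (m + j + 1) (2 * j + 1)) * x ^ (2 * j + 1) with hH
  -- extensions by zero terms
  have hg : ∑ j ∈ Finset.range (m + 3), G j = ∑ j ∈ Finset.range (m + 2), G j := by
    rw [Finset.sum_range_succ (n := m + 2), hG]
    simp only
    rw [Nat.choose_eq_zero_of_lt (by omega)]
    simp
  have hh : ∑ j ∈ Finset.range (m + 3), H j = ∑ j ∈ Finset.range (m + 1), H j := by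
    rw [Finset.sum_range_succ (n := m + 2), Finset.sum_range_succ (n := m + 1), hH]
    simp only
    rw [Nat.choose_eq_zero_of_lt (k := 2 * (m + 1) + 1) (by omega),
      Nat.choose_eq_zero_of_lt (k := 2 * (m + 2) + 1) (by omega)]
    simp
  have main : (∑ j ∈ Finset.range (m + 3), F j) + (∑ j ∈ Finset.range (m + 3), H j)
      + (∑ j ∈ Finset.range (m + 2), x ^ 2 * G j) = ∑ j ∈ Finset.range (m + 3), 2 * G j := by
    rw [Finset.sum_range_succ' F (m + 2), Finset.sum_range_succ' H (m + 2),
      Finset.sum_range_succ' (fun j => 2 * G j) (m + 2)]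
    have step : ∀ j ∈ Finset.range (m + 2), F (j + 1) + H (j + 1) + x ^ 2 * G j = 2 * G (j + 1) := by
      intro j _
      have hc := choose_key (m + j + 2) (2 * j + 1)
      have hc' : ((m + j + 4).choose (2 * j + 3) : ℝ) + (m + j + 2).choose (2 * j + 3)
          = 2 * ((m + j + 3).choose (2 * j + 3)) + (m + j + 2).choose (2 * j + 1) := by
        exact_mod_cast congrArg (Nat.cast : ℕ → ℝ) hc
      simp only [hF, hG, hH]
      have e1 : m + 2 + (j + 1) + 1 = m + j + 4 := by omega
      have e2 : m + (j + 1) + 1 = m + j + 2 := by omega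
      have e3 : m + 1 + (j + 1) + 1 = m + j + 3 := by omega
      have e5 : m + 1 + j + 1 = m + j + 2 := by omega
      have e4 : 2 * (j + 1) + 1 = 2 * j + 3 := by omega
      rw [e1, e2, e3, e4, e5]
      have hpow : x ^ (2 * j + 3) = x ^ 2 * x ^ (2 * j + 1) := by ring
      rw [hpow]
      have hp : (-1 : ℝ) ^ (j + 1) = (-1) * (-1 : ℝ) ^ j := by ring
      rw [hp]
      linear_combination ((-1) * (-1 : ℝ) ^ j * (x ^ 2 * x ^ (2 * j + 1))) * hc'
    have hsum : ∑ j ∈ Finset.range (m + 2), (F (j + 1) + (H (j + 1) + x ^ 2 * G j))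
        = ∑ j ∈ Finset.range (m + 2), 2 * G (j + 1) := by
      apply Finset.sum_congr rfl
      intro j hj
      have := step j hj
      linarith
    rw [Finset.sum_add_distrib, Finset.sum_add_distrib] at hsum
    have hconst : F 0 + H 0 = 2 * G 0 := by
      simp only [hF, hG, hH]
      norm_num
      push_cast
      ring
    linarith [hsum, hconst]
  have hxg : ∑ j ∈ Finset.range (m + 2), x ^ 2 * G j = x ^ 2 * ∑ j ∈ Finset.range (m + 2), G j := by
    rw [Finset.mul_sum]
  have hg0 : G (m + 2) = 0 := by
    simp only [hG]
    rw [Nat.choose_eq_zero_of_lt (by omega)]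
    simp
  have h2g : ∑ j ∈ Finset.range (m + 3), 2 * G j = 2 * ∑ j ∈ Finset.range (m + 2), G j := by
    rw [Finset.sum_range_succ, hg0, mul_zero, add_zero, Finset.mul_sum]
  rw [hxg, h2g, hh] at main
  linarith [main]

theorem stmt_13 (m : ℕ) (x : ℝ) (hx1 : -2 < x) (hx2 : x < 2) :
    ∑ j ∈ Finset.range (m + 1), (-1 : ℝ) ^ j * (Nat.choose (m + j + 1) (2 * j + 1)) * x ^ (2 * j + 1)
      = Real.sin (2 * (m + 1) * Real.arcsin (x / 2)) / Real.cos (Real.arcsin (x / 2)) := by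
  have hx1' : (-1 : ℝ) ≤ x / 2 := by linarith
  have hx2' : x / 2 ≤ 1 := by linarith
  set θ := Real.arcsin (x / 2) with hθ
  have hs : Real.sin θ = x / 2 := Real.sin_arcsin hx1' hx2'
  have hcpos : 0 < Real.cos θ := by
    apply Real.cos_pos_of_mem_Ioo
    constructor
    · exact Real.neg_pi_div_two_lt_arcsin.2 (by linarith)
    · exact Real.arcsin_lt_pi_div_two.2 (by linarith)
  have hcne : Real.cos θ ≠ 0 := ne_of_gt hcpos
  have hcos2 : Real.cos (2 * θ) = 1 - x ^ 2 / 2 := by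
    rw [Real.cos_two_mul]
    have := Real.sin_sq_add_cos_sq θ
    nlinarith [hs]
  induction m using Nat.twoStepInduction with
  | zero =>
    rw [Finset.sum_range_one]
    norm_num
    rw [Real.sin_two_mul, hs]
    field_simp
  | one =>
    rw [Finset.sum_range_succ, Finset.sum_range_one]
    norm_num
    rw [show (4 : ℝ) * θ = 2 * θ + 2 * θ by ring, Real.sin_add, Real.sin_two_mul, hcos2, hs]
    field_simp
    nlinarith [Real.sin_sq_add_cos_sq θ, hs]
  | more n ih1 ih2 =>
    have key : Real.sin (2 * ((n : ℝ) + 2 + 1) * θ)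
        = 2 * Real.sin (2 * ((n : ℝ) + 1 + 1) * θ) * Real.cos (2 * θ)
          - Real.sin (2 * ((n : ℝ) + 1) * θ) := by
      have h1 := Real.sin_add (2 * ((n : ℝ) + 2) * θ) (2 * θ)
      have h2 := Real.sin_sub (2 * ((n : ℝ) + 2) * θ) (2 * θ)
      have e1 : 2 * ((n : ℝ) + 2) * θ + 2 * θ = 2 * ((n : ℝ) + 2 + 1) * θ := by ring
      have e2 : 2 * ((n : ℝ) + 2) * θ - 2 * θ = 2 * ((n : ℝ) + 1) * θ := by ring
      have e3 : 2 * ((n : ℝ) + 2) * θ = 2 * ((n : ℝ) + 1 + 1) * θ := by ring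
      rw [e1] at h1
      rw [e2] at h2
      rw [e3] at h1 h2
      linarith
    have hrec := sum_rec n x
    have hn2 : n + 2 = n + 1 + 1 := by omega
    push_cast
    rw [show n + 2 + 1 = n + 3 from rfl] at hrec ⊢
    rw [hrec, ih1, ih2]
    push_cast at key ⊢
    rw [key, hcos2]
    field_simp
end

section
/- For integers m ≥ 0 and n ≥ 1 and any real a, ∑_{j=0}^m (-4)^j C(m+j, 2j) ∑_{k=0}^{n-1} sin(a+2kπ/n) cos(a+2kπ/n)^{2j} = (-1)^m ∑_{k=0}^{n-1} sin((2m+1)(a + 2kπ/n)). -/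
open Real Finset

lemma pascal3 (n j : ℕ) : (n+2).choose (2*j+2) + n.choose (2*j+2)
    = 2 * (n+1).choose (2*j+2) + n.choose (2*j) := by
  rw [show 2*j+2 = (2*j+1)+1 from rfl, show n+2 = (n+1)+1 from rfl,
    Nat.choose_succ_succ' (n+1) (2*j+1), Nat.choose_succ_succ' n (2*j+1),
    Nat.choose_succ_succ' n (2*j)]
  ring

lemma key (x : ℝ) (m : ℕ) :
    ∑ j ∈ Finset.range (m + 1), (-4 : ℝ) ^ j * (Nat.choose (m + j) (2 * j)) *
      (Real.sin x * Real.cos x ^ (2 * j))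
    = (-1 : ℝ) ^ m * Real.sin ((2 * m + 1) * x) := by
  induction m using Nat.twoStepInduction with
  | zero => simp
  | one =>
      rw [Finset.sum_range_succ, Finset.sum_range_one]
      norm_num
      rw [Real.sin_three_mul]
      linear_combination (-4 * Real.sin x) * (Real.sin_sq_add_cos_sq x)
  | more m ih0 ih1 =>
      have trig : Real.sin ((2*((m:ℝ)+2)+1)*x)
          = 2*(2*Real.cos x^2-1)*Real.sin ((2*((m:ℝ)+1)+1)*x) - Real.sin ((2*(m:ℝ)+1)*x) := by
        have h1 : (2*((m:ℝ)+2)+1)*x = (2*((m:ℝ)+1)+1)*x + 2*x := by ring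
        have h2 : (2*(m:ℝ)+1)*x = (2*((m:ℝ)+1)+1)*x - 2*x := by ring
        rw [h1, h2, Real.sin_add, Real.sin_sub, Real.cos_two_mul, Real.sin_two_mul]
        ring
      have E1 : ∑ j ∈ Finset.range (m + 1 + 1 + 1), (-4 : ℝ) ^ j * (Nat.choose (m + 1 + j) (2 * j)) *
            (Real.sin x * Real.cos x ^ (2 * j))
          = ∑ j ∈ Finset.range (m + 1 + 1), (-4 : ℝ) ^ j * (Nat.choose (m + 1 + j) (2 * j)) *
            (Real.sin x * Real.cos x ^ (2 * j)) := by
        rw [Finset.sum_range_succ, Nat.choose_eq_zero_of_lt (by omega)]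
        simp
      have E0 : ∑ j ∈ Finset.range (m + 1 + 1 + 1), (-4 : ℝ) ^ j * (Nat.choose (m + j) (2 * j)) *
            (Real.sin x * Real.cos x ^ (2 * j))
          = ∑ j ∈ Finset.range (m + 1), (-4 : ℝ) ^ j * (Nat.choose (m + j) (2 * j)) *
            (Real.sin x * Real.cos x ^ (2 * j)) := by
        rw [Finset.sum_range_succ, Nat.choose_eq_zero_of_lt (by omega),
            Finset.sum_range_succ, Nat.choose_eq_zero_of_lt (by omega)]
        simp
      have D : ∑ j ∈ Finset.range (m + 1 + 1 + 1),
            ((-4 : ℝ) ^ j * (Nat.choose (m + 2 + j) (2 * j)) * (Real.sin x * Real.cos x ^ (2 * j))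
             - 2 * ((-4 : ℝ) ^ j * (Nat.choose (m + 1 + j) (2 * j)) * (Real.sin x * Real.cos x ^ (2 * j)))
             + (-4 : ℝ) ^ j * (Nat.choose (m + j) (2 * j)) * (Real.sin x * Real.cos x ^ (2 * j)))
          = (∑ j ∈ Finset.range (m + 1 + 1 + 1), (-4 : ℝ) ^ j * (Nat.choose (m + 2 + j) (2 * j)) *
              (Real.sin x * Real.cos x ^ (2 * j)))
            - 2 * (∑ j ∈ Finset.range (m + 1 + 1 + 1), (-4 : ℝ) ^ j * (Nat.choose (m + 1 + j) (2 * j)) *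
              (Real.sin x * Real.cos x ^ (2 * j)))
            + ∑ j ∈ Finset.range (m + 1 + 1 + 1), (-4 : ℝ) ^ j * (Nat.choose (m + j) (2 * j)) *
              (Real.sin x * Real.cos x ^ (2 * j)) := by
        rw [Finset.sum_add_distrib, Finset.sum_sub_distrib, ← Finset.mul_sum]
      have M : ∑ j ∈ Finset.range (m + 1 + 1 + 1),
            ((-4 : ℝ) ^ j * (Nat.choose (m + 2 + j) (2 * j)) * (Real.sin x * Real.cos x ^ (2 * j))
             - 2 * ((-4 : ℝ) ^ j * (Nat.choose (m + 1 + j) (2 * j)) * (Real.sin x * Real.cos x ^ (2 * j)))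
             + (-4 : ℝ) ^ j * (Nat.choose (m + j) (2 * j)) * (Real.sin x * Real.cos x ^ (2 * j)))
          = (-4 * Real.cos x ^ 2) *
            ∑ j ∈ Finset.range (m + 1 + 1), (-4 : ℝ) ^ j * (Nat.choose (m + 1 + j) (2 * j)) *
              (Real.sin x * Real.cos x ^ (2 * j)) := by
        rw [Finset.sum_range_succ', Finset.mul_sum]
        simp only [pow_zero, Nat.mul_zero, Nat.choose_zero_right, Nat.cast_one]
        rw [show ((1:ℝ) * 1 * (Real.sin x * 1)
             - 2 * (1 * 1 * (Real.sin x * 1))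
             + 1 * 1 * (Real.sin x * 1)) = 0 by ring, add_zero]
        refine Finset.sum_congr rfl fun j hj => ?_
        have hp : ((m+1+j+2).choose (2*j+2) : ℝ) + (m+1+j).choose (2*j+2)
            = 2 * (m+1+j+1).choose (2*j+2) + (m+1+j).choose (2*j) := by
          exact_mod_cast pascal3 (m+1+j) j
        rw [show m + 2 + (j+1) = m+1+j+2 by omega, show m+1+(j+1) = m+1+j+1 by omega,
            show m + (j+1) = m+1+j by omega, show 2*(j+1) = 2*j+2 by omega]
        linear_combination ((-4:ℝ)^(j+1) * (Real.sin x * Real.cos x ^ (2*j+2))) * hp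
      push_cast at ih0 ih1 ⊢
      rw [trig]
      linear_combination M - D + 2*E1 - E0 + (2-4*Real.cos x^2)*ih1 - ih0

theorem stmt_16 (m n : ℕ) (hn : 1 ≤ n) (a : ℝ) :
    ∑ j ∈ Finset.range (m + 1), (-4 : ℝ) ^ j * (Nat.choose (m + j) (2 * j)) *
      ∑ k ∈ Finset.range n, Real.sin (a + 2 * k * π / n) * Real.cos (a + 2 * k * π / n) ^ (2 * j)
    = (-1 : ℝ) ^ m * ∑ k ∈ Finset.range n, Real.sin ((2 * m + 1) * (a + 2 * k * π / n)) := by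
  simp only [Finset.mul_sum]
  rw [Finset.sum_comm]
  refine Finset.sum_congr rfl fun k _ => ?_
  simpa using key (a + 2 * k * π / n) m
end
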